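/- Let 𝔛 be a countable set, let t ≥ 1, and let g : 𝔛^t → ℝ^c be a permutation-invariant function, i.e. g(f^{π(1)}, …, f^{π(t)}) = g(f^1, …, f^t) for every permutation π of {1, …, t}. Then g can be decomposed as g(f^1, …, f^t) = β(∑_{j=1}^t γ(f^j)) for suitable functions γ : 𝔛 → ℝ and β : ℝ → ℝ^c. -/

import Mathlib

open List

lemma sum_pow_le_of_forall_ge {r : ℝ} (hr0 : 0 ≤ r) (hr1 : r ≤ 1) (a : ℕ)
    (l : List ℕ) (h : ∀ x ∈ l, a ≤ x) :
    (l.map (fun n => r ^ n)).sum ≤ l.length * r ^ a := by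
  have := List.sum_le_card_nsmul (l.map (fun n => r ^ n)) (r ^ a) ?_
  · simpa [nsmul_eq_mul] using this
  · intro x hx
    simp only [List.mem_map] at hx
    obtain ⟨n, hn, rfl⟩ := hx
    exact pow_le_pow_of_le_one hr0 hr1 (h n hn)

lemma sorted_eq_of_sum_pow_eq (T : ℕ) :
    ∀ l l' : List ℕ, l.Pairwise (· ≤ ·) → l'.Pairwise (· ≤ ·) →
      l.length ≤ T → l'.length ≤ T →
      (l.map (fun n => ((T : ℝ) + 1)⁻¹ ^ n)).sum
        = (l'.map (fun n => ((T : ℝ) + 1)⁻¹ ^ n)).sum → l = l' := by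
  set r : ℝ := ((T : ℝ) + 1)⁻¹ with hr
  have hT1 : (0 : ℝ) < (T : ℝ) + 1 := by positivity
  have hr0 : 0 < r := by positivity
  have hr1 : r ≤ 1 := by
    rw [hr, inv_le_one_iff₀]; right; linarith
  -- key: all lists' sums positive terms
  have hpos : ∀ n : ℕ, 0 < r ^ n := fun n => pow_pos hr0 n
  have hsumpos : ∀ l : List ℕ, 0 ≤ (l.map (fun n => r ^ n)).sum := by
    intro l
    apply List.sum_nonneg
    intro x hx
    simp only [List.mem_map] at hx
    obtain ⟨n, _, rfl⟩ := hx
    exact (hpos n).le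
  -- heads compare
  have key : ∀ (a : ℕ) (l l' : List ℕ), (∀ x ∈ l', a + 1 ≤ x) → l'.length ≤ T →
      (l'.map (fun n => r ^ n)).sum < r ^ a + (l.map (fun n => r ^ n)).sum := by
    intro a l l' h hlen
    have h1 : (l'.map (fun n => r ^ n)).sum ≤ l'.length * r ^ (a + 1) :=
      sum_pow_le_of_forall_ge hr0.le hr1 (a+1) l' h
    have h2 : (l'.length : ℝ) * r ^ (a + 1) ≤ T * r ^ (a + 1) := by
      apply mul_le_mul_of_nonneg_right _ (hpos _).le
      exact_mod_cast hlen
    have h3 : (T : ℝ) * r ^ (a + 1) < r ^ a := by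
      rw [pow_succ, ← mul_assoc, mul_comm (T:ℝ) (r^a), mul_assoc]
      have : (T : ℝ) * r < 1 := by
        rw [hr, mul_inv_lt_iff₀ hT1]
        linarith
      nlinarith [hpos a]
    nlinarith [hsumpos l]
  intro l
  induction l with
  | nil =>
    intro l' _ hs' _ _ heq
    cases l' with
    | nil => rfl
    | cons b m =>
      exfalso
      have : 0 < (((b :: m).map (fun n => r ^ n)).sum) := by
        simp only [List.map_cons, List.sum_cons]
        have := hsumpos m
        nlinarith [hpos b]
      simp only [List.map_nil, List.sum_nil] at heq
      linarith
  | cons a l ih =>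
    intro l' hs hs' hlen hlen' heq
    cases l' with
    | nil =>
      exfalso
      have : 0 < (((a :: l).map (fun n => r ^ n)).sum) := by
        simp only [List.map_cons, List.sum_cons]
        have := hsumpos l
        nlinarith [hpos a]
      simp only [List.map_nil, List.sum_nil] at heq
      linarith
    | cons b m =>
      have hab : a = b := by
        by_contra hne
        rcases Nat.lt_or_ge a b with hab | hab
        · -- all elements of b::m ≥ a+1
          have hge : ∀ x ∈ (b :: m), a + 1 ≤ x := by
            intro x hx
            rcases List.mem_cons.mp hx with rfl | hx
            · omega
            · have := (List.pairwise_cons.mp hs').1 x hx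
              omega
          have := key a l (b :: m) hge hlen'
          simp only [List.map_cons, List.sum_cons] at heq this
          linarith
        · have hba : b < a := by omega
          have hge : ∀ x ∈ (a :: l), b + 1 ≤ x := by
            intro x hx
            rcases List.mem_cons.mp hx with rfl | hx
            · omega
            · have := (List.pairwise_cons.mp hs).1 x hx
              omega
          have := key b m (a :: l) hge hlen
          simp only [List.map_cons, List.sum_cons] at heq this
          linarith
      subst hab
      have htail : l = m := by
        apply ih m (List.pairwise_cons.mp hs).2 (List.pairwise_cons.mp hs').2
          (by simpa using Nat.le_of_succ_le hlen) (by simpa using Nat.le_of_succ_le hlen')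
        simp only [List.map_cons, List.sum_cons] at heq
        linarith
      rw [htail]

/-- Deep Sets: on a countable set 𝔛, every permutation-invariant
function `g : 𝔛^t → ℝ^c` decomposes as `g(f^1,…,f^t) = β(∑_j γ(f^j))`
for suitable `γ : 𝔛 → ℝ` and `β : ℝ → ℝ^c`. -/
theorem perm_invariant_decomposition
    {𝔛 : Type*} [Countable 𝔛] (t c : ℕ) (ht : 1 ≤ t)
    (g : (Fin t → 𝔛) → (Fin c → ℝ))
    (hg : ∀ (f : Fin t → 𝔛) (π : Equiv.Perm (Fin t)),
      g (fun j => f (π j)) = g f) :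
    ∃ (γ : 𝔛 → ℝ) (β : ℝ → (Fin c → ℝ)),
      ∀ f : Fin t → 𝔛, g f = β (∑ j, γ (f j)) := by
  obtain ⟨e, he⟩ := Countable.exists_injective_nat 𝔛
  set r : ℝ := ((t : ℝ) + 1)⁻¹ with hr
  set γ : 𝔛 → ℝ := fun x => r ^ (e x) with hγ
  -- the sum determines g
  have main : ∀ f f' : Fin t → 𝔛, (∑ j, γ (f j)) = (∑ j, γ (f' j)) → g f = g f' := by
    intro f f' hsum
    set σ := Tuple.sort (fun j => e (f j)) with hσ
    set σ' := Tuple.sort (fun j => e (f' j)) with hσ'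
    have hmono : Monotone ((fun j => e (f j)) ∘ σ) := Tuple.monotone_sort _
    have hmono' : Monotone ((fun j => e (f' j)) ∘ σ') := Tuple.monotone_sort _
    have hsum2 : (((List.ofFn (fun j => e (f (σ j))))).map (fun n => r ^ n)).sum
        = (((List.ofFn (fun j => e (f' (σ' j))))).map (fun n => r ^ n)).sum := by
      rw [List.map_ofFn, List.map_ofFn, List.sum_ofFn, List.sum_ofFn]
      calc ∑ j, (fun n => r ^ n) ((fun j => e (f j)) (σ j))
          = ∑ j, γ (f j) := Equiv.sum_comp σ (fun j => γ (f j))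
        _ = ∑ j, γ (f' j) := hsum
        _ = _ := (Equiv.sum_comp σ' (fun j => γ (f' j))).symm
    have heqlist : List.ofFn (fun j => e (f (σ j))) = List.ofFn (fun j => e (f' (σ' j))) := by
      apply sorted_eq_of_sum_pow_eq t _ _ _ _ _ _ hsum2
      · exact (Monotone.sortedLE_ofFn hmono).pairwise
      · exact (Monotone.sortedLE_ofFn hmono').pairwise
      · simp
      · simp
    have heqfun : (fun j => e (f (σ j))) = (fun j => e (f' (σ' j))) :=
      List.ofFn_injective heqlist
    have heqf : ∀ j, f (σ j) = f' (σ' j) := by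
      intro j
      exact he (congrFun heqfun j)
    -- g f = g (f ∘ σ) = g (f' ∘ σ') = g f'
    have h1 : g (fun j => f (σ j)) = g f := hg f σ
    have h2 : g (fun j => f' (σ' j)) = g f' := hg f' σ'
    rw [← h1, ← h2]
    have : (fun j => f (σ j)) = (fun j => f' (σ' j)) := funext heqf
    rw [this]
  classical
  refine ⟨γ, fun s => if h : ∃ f : Fin t → 𝔛, (∑ j, γ (f j)) = s then g h.choose else 0, ?_⟩
  intro f
  have hex : ∃ f' : Fin t → 𝔛, (∑ j, γ (f' j)) = (∑ j, γ (f j)) := ⟨f, rfl⟩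
  simp only [dif_pos hex]
  exact (main hex.choose f hex.choose_spec).symm
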